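/- Let n, k ≥ 1 be integers, C : [n]^k → ℝ, μ_1, …, μ_k ∈ Δ_n, ε > 0, and η ≥ ε^{−1} k log n. Let MOT* := min_{Q ∈ M(μ_1,…,μ_k)} ⟨C, Q⟩ and RMOT* := min_{Q ∈ M(μ_1,…,μ_k)} (⟨C, Q⟩ − η^{−1} H(Q)). Then for any P ∈ M(μ_1,…,μ_k): if ⟨C, P⟩ − η^{−1} H(P) ≤ RMOT* + ε then ⟨C, P⟩ ≤ MOT* + 2ε; and conversely, if ⟨C, P⟩ ≤ MOT* + ε then ⟨C, P⟩ − η^{−1} H(P) ≤ RMOT* + 2ε. -/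

import Mathlib

set_option maxHeartbeats 1000000


/-- The transportation polytope `M(μ_1, …, μ_k)`. -/
def transportPolytope (n k : ℕ) (μ : Fin k → Fin n → ℝ) :
    Set ((Fin k → Fin n) → ℝ) :=
  {P | (∀ j, 0 ≤ P j) ∧
    ∀ (i : Fin k) (t : Fin n),
      ∑ j ∈ Finset.univ.filter (fun j : Fin k → Fin n => j i = t), P j = μ i t}

/-- Shannon entropy `H(P) = -∑_j P_j log P_j` (with the convention `0 log 0 = 0`,
automatic since `Real.log 0 = 0`). -/
noncomputable def shannonEntropy (n k : ℕ) (P : (Fin k → Fin n) → ℝ) : ℝ :=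
  -∑ j : Fin k → Fin n, P j * Real.log (P j)

lemma sum_eq_one_of_mem_transportPolytope {n k : ℕ} (hk : 1 ≤ k)
    {μ : Fin k → Fin n → ℝ} (hμ : ∀ i : Fin k, (∀ t, 0 ≤ μ i t) ∧ ∑ t : Fin n, μ i t = 1)
    {Q : (Fin k → Fin n) → ℝ} (hQ : Q ∈ transportPolytope n k μ) :
    ∑ j : Fin k → Fin n, Q j = 1 := by
  have i : Fin k := ⟨0, hk⟩
  calc ∑ j : Fin k → Fin n, Q j
      = ∑ t : Fin n, ∑ j ∈ Finset.univ.filter (fun j : Fin k → Fin n => j i = t), Q j :=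
        (Finset.sum_fiberwise Finset.univ (fun j => j i) Q).symm
    _ = ∑ t : Fin n, μ i t := by
        exact Finset.sum_congr rfl fun t _ => hQ.2 i t
    _ = 1 := (hμ i).2

lemma le_one_of_mem_transportPolytope {n k : ℕ} (hk : 1 ≤ k)
    {μ : Fin k → Fin n → ℝ} (hμ : ∀ i : Fin k, (∀ t, 0 ≤ μ i t) ∧ ∑ t : Fin n, μ i t = 1)
    {Q : (Fin k → Fin n) → ℝ} (hQ : Q ∈ transportPolytope n k μ) (j : Fin k → Fin n) :
    Q j ≤ 1 := by
  rw [← sum_eq_one_of_mem_transportPolytope hk hμ hQ]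
  exact Finset.single_le_sum (fun j _ => hQ.1 j) (Finset.mem_univ j)

lemma shannonEntropy_nonneg {n k : ℕ} (hk : 1 ≤ k)
    {μ : Fin k → Fin n → ℝ} (hμ : ∀ i : Fin k, (∀ t, 0 ≤ μ i t) ∧ ∑ t : Fin n, μ i t = 1)
    {Q : (Fin k → Fin n) → ℝ} (hQ : Q ∈ transportPolytope n k μ) :
    0 ≤ shannonEntropy n k Q := by
  rw [shannonEntropy, neg_nonneg]
  exact Finset.sum_nonpos fun j _ =>
    Real.mul_log_nonpos (hQ.1 j) (le_one_of_mem_transportPolytope hk hμ hQ j)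

/-- pointwise bound: `-(p log p) ≤ 1/N - p + p log N` for `p ≥ 0`, `N > 0`. -/
lemma neg_mul_log_le {p N : ℝ} (hp : 0 ≤ p) (hN : 0 < N) :
    -(p * Real.log p) ≤ 1 / N - p + p * Real.log N := by
  rcases eq_or_lt_of_le hp with h | h
  · simp [← h]
    positivity
  · have h1 : 0 < 1 / (N * p) := by positivity
    have h2 : Real.log (1 / (N * p)) ≤ 1 / (N * p) - 1 := Real.log_le_sub_one_of_pos h1
    have h3 : Real.log (1 / (N * p)) = -Real.log N - Real.log p := by
      rw [one_div, Real.log_inv, Real.log_mul (ne_of_gt hN) (ne_of_gt h)]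
      ring
    have h4 : p * (-Real.log N - Real.log p) ≤ p * (1 / (N * p) - 1) := by
      rw [← h3]; exact mul_le_mul_of_nonneg_left h2 hp
    have h5 : p * (1 / (N * p)) = 1 / N := by
      field_simp
    nlinarith [h4, h5]

lemma shannonEntropy_le {n k : ℕ} (hn : 1 ≤ n) (hk : 1 ≤ k)
    {μ : Fin k → Fin n → ℝ} (hμ : ∀ i : Fin k, (∀ t, 0 ≤ μ i t) ∧ ∑ t : Fin n, μ i t = 1)
    {Q : (Fin k → Fin n) → ℝ} (hQ : Q ∈ transportPolytope n k μ) :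
    shannonEntropy n k Q ≤ k * Real.log n := by
  have hN : (0 : ℝ) < (n : ℝ) ^ k := by positivity
  have hcard : (Finset.univ : Finset (Fin k → Fin n)).card = n ^ k := by
    simp [Finset.card_univ]
  have hsum := sum_eq_one_of_mem_transportPolytope hk hμ hQ
  have hlog : Real.log ((n : ℝ) ^ k) = k * Real.log n := by
    rw [Real.log_pow]
  calc shannonEntropy n k Q
      = ∑ j : Fin k → Fin n, -(Q j * Real.log (Q j)) := by
        rw [shannonEntropy]; rw [← Finset.sum_neg_distrib]
    _ ≤ ∑ j : Fin k → Fin n, (1 / (n : ℝ) ^ k - Q j + Q j * Real.log ((n : ℝ) ^ k)) :=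
        Finset.sum_le_sum fun j _ => neg_mul_log_le (hQ.1 j) hN
    _ = (n ^ k : ℝ) * (1 / (n : ℝ) ^ k) - 1 + 1 * Real.log ((n : ℝ) ^ k) := by
        rw [Finset.sum_add_distrib, Finset.sum_sub_distrib, ← Finset.sum_mul, hsum,
          Finset.sum_const, hcard]
        ring
    _ = k * Real.log n := by
        rw [hlog]
        field_simp
        ring
    _ ≤ k * Real.log n := le_refl _

/-- `MOT` and `RMOT` are close for large regularization `η ≥ ε⁻¹ k log n`:
an `ε`-approximate solution to the entropically regularized problem is a
`2ε`-approximate solution to the unregularized one, and vice versa. -/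
theorem MOT_RMOT_close (n k : ℕ) (hn : 1 ≤ n) (hk : 1 ≤ k)
    (C : (Fin k → Fin n) → ℝ) (μ : Fin k → Fin n → ℝ)
    (hμ : ∀ i : Fin k, (∀ t, 0 ≤ μ i t) ∧ ∑ t : Fin n, μ i t = 1)
    (ε η : ℝ) (hε : 0 < ε) (hη0 : 0 < η) (hη : ε⁻¹ * k * Real.log n ≤ η)
    (MOTstar RMOTstar : ℝ)
    (hMOT : MOTstar =
      sInf {v : ℝ | ∃ Q ∈ transportPolytope n k μ, v = ∑ j, C j * Q j})
    (hRMOT : RMOTstar =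
      sInf {v : ℝ | ∃ Q ∈ transportPolytope n k μ,
        v = (∑ j, C j * Q j) - η⁻¹ * shannonEntropy n k Q})
    (P : (Fin k → Fin n) → ℝ) (hP : P ∈ transportPolytope n k μ) :
    ((∑ j, C j * P j) - η⁻¹ * shannonEntropy n k P ≤ RMOTstar + ε →
      ∑ j, C j * P j ≤ MOTstar + 2 * ε) ∧
    (∑ j, C j * P j ≤ MOTstar + ε →
      (∑ j, C j * P j) - η⁻¹ * shannonEntropy n k P ≤ RMOTstar + 2 * ε) := by
  set S := {v : ℝ | ∃ Q ∈ transportPolytope n k μ, v = ∑ j, C j * Q j} with hS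
  set R := {v : ℝ | ∃ Q ∈ transportPolytope n k μ,
    v = (∑ j, C j * Q j) - η⁻¹ * shannonEntropy n k Q} with hR
  -- key bound: for any Q in the polytope, 0 ≤ η⁻¹ H(Q) ≤ ε
  have hklogn : (0 : ℝ) ≤ k * Real.log n := by
    have : (0:ℝ) ≤ Real.log n := Real.log_nonneg (by exact_mod_cast hn)
    positivity
  have hεη : k * Real.log n ≤ ε * η := by
    have h1 : ε⁻¹ * (k * Real.log n) ≤ η := by
      rw [← mul_assoc]; exact hη
    calc k * Real.log n = ε * (ε⁻¹ * (k * Real.log n)) := by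
          field_simp
      _ ≤ ε * η := by
          exact mul_le_mul_of_nonneg_left h1 (le_of_lt hε)
  have key : ∀ Q ∈ transportPolytope n k μ,
      0 ≤ η⁻¹ * shannonEntropy n k Q ∧ η⁻¹ * shannonEntropy n k Q ≤ ε := by
    intro Q hQ
    have h0 := shannonEntropy_nonneg hk hμ hQ
    have h1 := shannonEntropy_le hn hk hμ hQ
    constructor
    · positivity
    · rw [inv_mul_le_iff₀ hη0]
      calc shannonEntropy n k Q ≤ k * Real.log n := h1
        _ ≤ ε * η := hεη
        _ = η * ε := mul_comm _ _
  -- bounds on costs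
  set B : ℝ := ∑ j : Fin k → Fin n, |C j| with hB
  have hcost : ∀ Q ∈ transportPolytope n k μ, -B ≤ ∑ j, C j * Q j := by
    intro Q hQ
    have : ∀ j : Fin k → Fin n, -|C j| ≤ C j * Q j := by
      intro j
      have h0 := hQ.1 j
      have h1 := le_one_of_mem_transportPolytope hk hμ hQ j
      rcases le_or_gt 0 (C j) with h | h
      · calc -|C j| ≤ 0 := neg_nonpos_of_nonneg (abs_nonneg _)
          _ ≤ C j * Q j := mul_nonneg h h0
      · calc -|C j| = C j := by rw [abs_of_neg h]; ring
          _ = C j * 1 := by ring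
          _ ≤ C j * Q j := by nlinarith
    calc -B = ∑ j : Fin k → Fin n, -|C j| := by rw [hB, ← Finset.sum_neg_distrib]
      _ ≤ ∑ j, C j * Q j := Finset.sum_le_sum fun j _ => this j
  have hSbdd : BddBelow S := by
    refine ⟨-B, fun v hv => ?_⟩
    obtain ⟨Q, hQ, rfl⟩ := hv
    exact hcost Q hQ
  have hRbdd : BddBelow R := by
    refine ⟨-B - ε, fun v hv => ?_⟩
    obtain ⟨Q, hQ, rfl⟩ := hv
    have h1 := hcost Q hQ
    have h2 := (key Q hQ).2
    linarith
  have hSne : S.Nonempty := ⟨_, P, hP, rfl⟩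
  have hRne : R.Nonempty := ⟨_, P, hP, rfl⟩
  -- RMOT* ≤ MOT*
  have hRM : RMOTstar ≤ MOTstar := by
    rw [hMOT, hRMOT]
    apply le_csInf hSne
    intro v hv
    obtain ⟨Q, hQ, rfl⟩ := hv
    have h2 := (key Q hQ).1
    calc sInf R ≤ (∑ j, C j * Q j) - η⁻¹ * shannonEntropy n k Q :=
          csInf_le hRbdd ⟨Q, hQ, rfl⟩
      _ ≤ ∑ j, C j * Q j := by linarith
  -- MOT* ≤ RMOT* + ε
  have hMR : MOTstar ≤ RMOTstar + ε := by
    rw [hMOT, hRMOT]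
    rw [← sub_le_iff_le_add]
    apply le_csInf hRne
    intro v hv
    obtain ⟨Q, hQ, rfl⟩ := hv
    have h2 := (key Q hQ).2
    have h3 : sInf S ≤ ∑ j, C j * Q j := csInf_le hSbdd ⟨Q, hQ, rfl⟩
    linarith
  have hPkey := key P hP
  constructor
  · intro h
    have : ∑ j, C j * P j ≤ RMOTstar + ε + η⁻¹ * shannonEntropy n k P := by linarith
    calc ∑ j, C j * P j ≤ RMOTstar + ε + ε := by linarith [hPkey.2]
      _ ≤ MOTstar + 2 * ε := by linarith
  · intro h
    calc (∑ j, C j * P j) - η⁻¹ * shannonEntropy n k P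
        ≤ ∑ j, C j * P j := by linarith [hPkey.1]
      _ ≤ MOTstar + ε := h
      _ ≤ RMOTstar + 2 * ε := by linarith
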